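/- The Cartesian product with both arguments safe, prod(- /a,b) = a×b = {⟨u,v⟩ : u∈a, v∈b}, is not in PCSF; moreover even the function f(- /a) = {0}×a = {⟨0,b⟩ : b∈a} (with safe argument a) is not in PCSF. On the other hand, the Cartesian product with both arguments normal, f(x,y/ -) = x×y, is in PCSF. Here ⟨u,v⟩ = {{u},{u,v}} is the Kuratowski pair. -/

import Mathlib

open scoped Classical

noncomputable section

namespace PCSFPaper

/-! ## Basic ZF-set helpers -/

/-- Image `{f z : z ∈ x}` of a ZF-set under an arbitrary class function. -/
noncomputable def zImage (f : ZFSet → ZFSet) (x : ZFSet) : ZFSet :=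
  @ZFSet.image f (Classical.allZFSetDefinable fun s => f (s 0)) x

/-- Kuratowski ordered pair `⟨c,d⟩ = {{c},{c,d}}`. -/
def kpair (c d : ZFSet) : ZFSet := {{c}, {c, d}}

/-! ## Δ₀ formulas of the language of set theory -/

/-- Δ₀ (bounded) formulas in the first-order language of set theory,
with `k` free variables.  In the bounded quantifiers `ball i φ`/`bex i φ`
the newly bound variable (ranging over the elements of variable `i`)
becomes variable `0` of `φ`, the old variables being shifted up by one. -/
inductive D0 : ℕ → Type
  | mem {k : ℕ} (i j : Fin k) : D0 k
  | eq {k : ℕ} (i j : Fin k) : D0 k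
  | not {k : ℕ} : D0 k → D0 k
  | and {k : ℕ} : D0 k → D0 k → D0 k
  | or {k : ℕ} : D0 k → D0 k → D0 k
  | ball {k : ℕ} (i : Fin k) : D0 (k + 1) → D0 k
  | bex {k : ℕ} (i : Fin k) : D0 (k + 1) → D0 k

/-- Satisfaction of Δ₀ formulas in the universe of ZF-sets. -/
def D0.Sat : ∀ {k : ℕ}, D0 k → (Fin k → ZFSet) → Prop
  | _, .mem i j, v => v i ∈ v j
  | _, .eq i j, v => v i = v j
  | _, .not φ, v => ¬ φ.Sat v
  | _, .and φ ψ, v => φ.Sat v ∧ ψ.Sat v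
  | _, .or φ ψ, v => φ.Sat v ∨ ψ.Sat v
  | _, .ball i φ, v => ∀ z ∈ v i, φ.Sat (Fin.cons z v)
  | _, .bex i φ, v => ∃ z ∈ v i, φ.Sat (Fin.cons z v)

/-- A `k`-ary relation on sets is Δ₀ iff it is defined by some Δ₀ formula. -/
def IsDelta0 {k : ℕ} (R : (Fin k → ZFSet) → Prop) : Prop :=
  ∃ φ : D0 k, ∀ v, R v ↔ φ.Sat v

/-! ## The classes PCSF⁻ and PCSF -/

/-- The class `PCSF⁻` of predicatively computable set functions taking only
safe arguments: generated from projections, pairing, null, union and the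
membership conditional, by composition and safe separation. -/
inductive PCSFminus : ∀ m : ℕ, ((Fin m → ZFSet) → ZFSet) → Prop
  | proj {m : ℕ} (j : Fin m) : PCSFminus m fun a => a j
  | pair : PCSFminus 2 fun a => {a 0, a 1}
  | null : PCSFminus 0 fun _ => ∅
  | union : PCSFminus 1 fun a => ZFSet.sUnion (a 0)
  | cond : PCSFminus 4 fun a => if a 2 ∈ a 3 then a 0 else a 1
  | comp {m k : ℕ} (h : (Fin k → ZFSet) → ZFSet) (t : Fin k → (Fin m → ZFSet) → ZFSet) :
      PCSFminus k h → (∀ i, PCSFminus m (t i)) →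
      PCSFminus m fun a => h fun i => t i a
  | sep {m : ℕ} (h : (Fin (m + 1) → ZFSet) → ZFSet) :
      PCSFminus (m + 1) h →
      PCSFminus (m + 1) fun a =>
        ZFSet.sep (fun b => h (Fin.snoc (Fin.init a) b) ≠ ∅) (a (Fin.last m))

/-- The class `PCSF` of predicatively computable set functions, with `n` normal
and `m` safe arguments: generated from `PCSF⁻` (whose arguments are all safe)
and projections by safe composition and predicative set recursion.  The
recursion rule is stated via its defining equation (which determines the
function uniquely, by ∈-induction); the recursion argument `x` is the first
normal argument, and the set `{f(z,ȳ/ā) : z ∈ x}` of previous values is passed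
to `h` as a last, safe, argument. -/
inductive PCSF : ∀ n m : ℕ, ((Fin n → ZFSet) → (Fin m → ZFSet) → ZFSet) → Prop
  | ofMinus {m : ℕ} (h : (Fin m → ZFSet) → ZFSet) :
      PCSFminus m h → PCSF 0 m fun _ a => h a
  | proj {n m : ℕ} (j : Fin (n + m)) : PCSF n m fun x a => Fin.append x a j
  | comp {n m k l : ℕ} (h : (Fin k → ZFSet) → (Fin l → ZFSet) → ZFSet)
      (r : Fin k → (Fin n → ZFSet) → (Fin 0 → ZFSet) → ZFSet)
      (t : Fin l → (Fin n → ZFSet) → (Fin m → ZFSet) → ZFSet) :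
      PCSF k l h → (∀ i, PCSF n 0 (r i)) → (∀ i, PCSF n m (t i)) →
      PCSF n m fun x a => h (fun i => r i x Fin.elim0) fun i => t i x a
  | recur {n m : ℕ} (h : (Fin (n + 1) → ZFSet) → (Fin (m + 1) → ZFSet) → ZFSet)
      (f : (Fin (n + 1) → ZFSet) → (Fin m → ZFSet) → ZFSet) :
      PCSF (n + 1) (m + 1) h →
      (∀ (x : ZFSet) (y : Fin n → ZFSet) (a : Fin m → ZFSet),
        f (Fin.cons x y) a =
          h (Fin.cons x y) (Fin.snoc a (zImage (fun z => f (Fin.cons z y) a) x))) →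
      PCSF (n + 1) m f

/-- A relation is in `PCSF` iff its characteristic function
(`1 = {∅}` for true, `0 = ∅` for false) is in `PCSF`. -/
def PCSFRel (n m : ℕ) (R : (Fin n → ZFSet) → (Fin m → ZFSet) → Prop) : Prop :=
  PCSF n m fun x a => if R x a then ({∅} : ZFSet) else ∅

/-! ## Transitive closure, hereditary finiteness -/

/-- Transitive closure `TC(x) = x ∪ ⋃{TC(y) : y ∈ x}` by ∈-recursion. -/
noncomputable def TCset : ZFSet → ZFSet :=
  ZFSet.mem_wf.fix fun x ih =>
    x ∪ ZFSet.sUnion (zImage (fun y => if h : y ∈ x then ih y h else ∅) x)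

/-- A set is hereditarily finite iff its transitive closure is finite. -/
def IsHF (x : ZFSet) : Prop := (TCset x).toSet.Finite

/-- `cT x` = cardinality of the transitive closure of `x`
(junk value `0` if infinite). -/
noncomputable def cT (x : ZFSet) : ℕ := (TCset x).toSet.ncard

/-- The finite union `A₁ ∪ ⋯ ∪ Aₘ`. -/
def unionFin {m : ℕ} (A : Fin m → ZFSet) : ZFSet :=
  (List.ofFn A).foldr (· ∪ ·) ∅

/-! ## The encoding ν of binary strings, application, product -/

/-- The von Neumann numeral 1 = {∅}. -/
def zOne : ZFSet := {∅}

/-- The von Neumann numeral 2 = {∅,{∅}}. -/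
def zTwo : ZFSet := {∅, {∅}}

/-- The encoding of binary strings (head of the list = last appended bit):
`ν(ε) = ∅` and `ν(s i) = ⟨i+1, ν s⟩`, a bit `i ∈ {0,1}` being represented
by the boolean `i = 1`. -/
def nu : List Bool → ZFSet
  | [] => ∅
  | b :: s => kpair (if b then zTwo else zOne) (nu s)

/-- `zApp b c = b'c = ⋃{d ∈ ⋃⋃b : ⟨c,d⟩ ∈ b}` (which is `⋃{d : ⟨c,d⟩ ∈ b}`,
since every such `d` belongs to `⋃⋃b`). -/
def zApp (b c : ZFSet) : ZFSet :=
  ZFSet.sUnion (ZFSet.sep (fun d => kpair c d ∈ b) (ZFSet.sUnion (ZFSet.sUnion b)))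

/-- Cartesian product `a × b = {⟨u,v⟩ : u ∈ a, v ∈ b}` (with Kuratowski pairs). -/
noncomputable def zProd (a b : ZFSet) : ZFSet :=
  ZFSet.sUnion (zImage (fun u => zImage (fun v => kpair u v) b) a)

/-! ## Polynomial time computability on binary strings -/

/-- The trivial encoding of binary strings over the alphabet `Bool`. -/
def boolListEncoding : Computability.Encoding (List Bool) Bool where
  encode := id
  decode := fun l => some l
  decode_encode := fun _ => rfl

/-- Encoding of a tuple of binary strings over the alphabet `Option Bool`:
the strings are listed in order, each terminated by the separator `none`. -/
def encTuple : (k : ℕ) → (Fin k → List Bool) → List (Option Bool)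
  | 0, _ => []
  | k + 1, v => (v 0).map some ++ none :: encTuple k (Fin.tail v)

/-- Splits off the first separator-terminated block. -/
def splitFirst : List (Option Bool) → List Bool × List (Option Bool)
  | [] => ([], [])
  | none :: l => ([], l)
  | some b :: l => ((splitFirst l).1.cons b, (splitFirst l).2)

theorem splitFirst_encode (s : List Bool) (rest : List (Option Bool)) :
    splitFirst (s.map some ++ none :: rest) = (s, rest) := by
  induction s with
  | nil => rfl
  | cons b s ih => simp [splitFirst, ih]

/-- Decoding of tuples of binary strings. -/
def decTuple : (k : ℕ) → List (Option Bool) → Option (Fin k → List Bool)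
  | 0, _ => some Fin.elim0
  | k + 1, l =>
    (decTuple k (splitFirst l).2).map fun v => Fin.cons (splitFirst l).1 v

theorem decTuple_encTuple : ∀ (k : ℕ) (v : Fin k → List Bool),
    decTuple k (encTuple k v) = some v := by
  intro k
  induction k with
  | zero =>
    intro v
    simp only [decTuple]
    congr
    exact funext fun i => i.elim0
  | succ k ih =>
    intro v
    simp [decTuple, encTuple, splitFirst_encode, ih (Fin.tail v), Fin.cons_self_tail]

/-- The standard encoding of tuples of binary strings. -/
def tupleEncoding (k : ℕ) : Computability.Encoding (Fin k → List Bool) (Option Bool) where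
  encode := encTuple k
  decode := decTuple k
  decode_encode := decTuple_encTuple k

/-- A function on tuples of binary strings is polynomial time computable iff
some two-stack machine computes it in polynomial time (Mathlib's notion). -/
def PolyTimeStringFun {k : ℕ} (f : (Fin k → List Bool) → List Bool) : Prop :=
  Nonempty (Turing.TM2ComputableInPolyTime (tupleEncoding k).encode boolListEncoding.encode f)

/-- Polynomial time computability for functions on ℕ,
with respect to the standard binary encoding of naturals. -/
def PolyTimeNatFun (f : ℕ → ℕ) : Prop :=
  Nonempty (Turing.TM2ComputableInPolyTime Computability.encodingNatBool.encode
    Computability.encodingNatBool.encode f)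

/-! ## A feasible encoding of lists of naturals by naturals -/

/-- Reads a list of bits (least significant first) as a natural number. -/
def bitsToNat (l : List Bool) : ℕ := l.foldr (fun b n => Nat.bit b n) 0

/-- A standard feasible (linear size) encoding of lists of natural numbers:
every bit of the binary expansion of an entry is escaped as `[false, b]`,
entries are terminated by `[true, true]`, and a final `true` protects
leading zeros. -/
def encodeNatList (l : List ℕ) : ℕ :=
  bitsToNat
    ((l.map fun n => (Nat.bits n).foldr (fun b acc => false :: b :: acc) [true, true]).foldr
        (· ++ ·) [true])

/-! ## Rooted DAGs encoding hereditarily finite sets -/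

/-- A rooted DAG: a finite set `V` of natural numbers, edges `E ⊆ V × V`
going strictly downwards, and a root `r ∈ V` which is the only node of
indegree zero. -/
structure RootedDag where
  V : Finset ℕ
  E : Finset (ℕ × ℕ)
  r : ℕ
  edge_mem : ∀ e ∈ E, e.1 ∈ V ∧ e.2 ∈ V
  root_mem : r ∈ V
  root_indeg : ∀ e ∈ E, e.2 ≠ r
  reach_nonroot : ∀ a ∈ V, a ≠ r → ∃ b ∈ V, (b, a) ∈ E
  desc : ∀ e ∈ E, e.2 < e.1

namespace RootedDag

/-- The children of a node. -/
def children (G : RootedDag) (a : ℕ) : Finset ℕ :=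
  (G.E.filter fun e => e.1 = a).image Prod.snd

theorem children_lt (G : RootedDag) {a b : ℕ} (h : b ∈ G.children a) : b < a := by
  simp only [children, Finset.mem_image, Finset.mem_filter] at h
  obtain ⟨e, ⟨heE, he1⟩, he2⟩ := h
  have := G.desc e heE
  omega

/-- The hereditarily finite set encoded at a node:
`set_G(a) = {set_G(b) : (a,b) ∈ E}`. -/
def setAt (G : RootedDag) (a : ℕ) : ZFSet.{0} :=
  (((G.children a).attach.toList).map fun b => G.setAt b.1).foldr insert ∅
termination_by a
decreasing_by exact G.children_lt b.2

/-- The hereditarily finite set encoded by a rooted DAG. -/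
def set (G : RootedDag) : ZFSet.{0} := G.setAt G.r

/-- A DAG is fully collapsed iff distinct nodes encode distinct sets. -/
def FullyCollapsed (G : RootedDag) : Prop :=
  ∀ a ∈ G.V, ∀ b ∈ G.V, G.setAt a = G.setAt b → a = b

/-- Reachability along edges. -/
def Reaches (G : RootedDag) (a b : ℕ) : Prop :=
  Relation.ReflTransGen (fun u v => (u, v) ∈ G.E) a b

/-- The node set of the sub-DAG `G|a` of nodes reachable from `a`. -/
noncomputable def reachSet (G : RootedDag) (a : ℕ) : Finset ℕ :=
  G.V.filter fun b => G.Reaches a b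

/-- A DAG is balanced iff each node `a` is at most the number of nodes of `G|a`. -/
def Balanced (G : RootedDag) : Prop :=
  ∀ a ∈ G.V, a ≤ (G.reachSet a).card

end RootedDag

/-- The numeric code `⌈G⌉` of a rooted DAG: the code of the triple consisting
of (the code of) the sorted list of vertices, (the code of) the sorted list of
pair-coded edges, and the root. -/
noncomputable def RootedDag.code (G : RootedDag) : ℕ :=
  encodeNatList [encodeNatList (G.V.sort (· ≤ ·)),
    encodeNatList ((G.E.image fun e => Nat.pair e.1 e.2).sort (· ≤ ·)), G.r]

/-- The finite set `{l₀, …, l_{n-1}}` as a ZF-set. -/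
def zSetOfList (l : List ZFSet) : ZFSet := l.foldr insert ∅


/-! ## Aux development (sections A–E) -/

theorem ZFSet.mem_toSet (a u : ZFSet) : a ∈ u.toSet ↔ a ∈ u := Iff.rfl

theorem ZFSet.toSet_empty : (∅ : ZFSet).toSet = ∅ := ZFSet.coe_empty

theorem ZFSet.toSet_insert (x y : ZFSet) : (insert x y).toSet = insert x y.toSet :=
  ZFSet.coe_insert x y

theorem ZFSet.toSet_singleton (x : ZFSet) : ({x} : ZFSet).toSet = {x} :=
  ZFSet.coe_singleton x

-- basics
theorem mem_zImage {f : ZFSet → ZFSet} {x y : ZFSet} :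
    y ∈ zImage f x ↔ ∃ z ∈ x, f z = y := by
  unfold zImage
  exact @ZFSet.mem_image f (Classical.allZFSetDefinable fun s => f (s 0)) x y

theorem zImage_congr {f g : ZFSet → ZFSet} {x : ZFSet} (h : ∀ z ∈ x, f z = g z) :
    zImage f x = zImage g x := by
  apply ZFSet.ext; intro w
  simp only [mem_zImage]
  constructor
  · rintro ⟨z, hz, rfl⟩; exact ⟨z, hz, (h z hz).symm⟩
  · rintro ⟨z, hz, rfl⟩; exact ⟨z, hz, h z hz⟩

theorem toSet_zImage (f : ZFSet → ZFSet) (x : ZFSet) :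
    (zImage f x).toSet = f '' x.toSet := by
  ext w; simp [zImage, ZFSet.mem_toSet, Set.mem_image, mem_zImage]

theorem TCset_eq (x : ZFSet) : TCset x = x ∪ ZFSet.sUnion (zImage TCset x) := by
  have h := WellFounded.fix_eq ZFSet.mem_wf (fun x ih =>
    x ∪ ZFSet.sUnion (zImage (fun y => if h : y ∈ x then ih y h else ∅) x)) x
  show ZFSet.mem_wf.fix _ x = _
  rw [h]
  congr 1
  congr 1
  apply zImage_congr
  intro z hz
  rw [dif_pos hz]
  rfl

theorem mem_TCset {w x : ZFSet} : w ∈ TCset x ↔ w ∈ x ∨ ∃ y ∈ x, w ∈ TCset y := by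
  conv_lhs => rw [TCset_eq]
  rw [ZFSet.mem_union, ZFSet.mem_sUnion]
  constructor
  · rintro (h | ⟨z, hz, hw⟩)
    · exact Or.inl h
    · rcases mem_zImage.1 hz with ⟨y, hy, rfl⟩
      exact Or.inr ⟨y, hy, hw⟩
  · rintro (h | ⟨y, hy, hw⟩)
    · exact Or.inl h
    · exact Or.inr ⟨TCset y, mem_zImage.2 ⟨y, hy, rfl⟩, hw⟩

theorem mem_TCset_of_mem {y x : ZFSet} (h : y ∈ x) : y ∈ TCset x :=
  mem_TCset.2 (Or.inl h)

theorem TCset_trans {x : ZFSet} : ∀ {u}, u ∈ TCset x → ∀ {w}, w ∈ u → w ∈ TCset x := by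
  induction x using ZFSet.inductionOn with
  | _ x ih =>
    intro u hu w hw
    rcases mem_TCset.1 hu with h | ⟨y, hy, h⟩
    · exact mem_TCset.2 (Or.inr ⟨u, h, mem_TCset_of_mem hw⟩)
    · exact mem_TCset.2 (Or.inr ⟨y, hy, ih y hy h hw⟩)

theorem TCset_subset_of_mem {u x : ZFSet} (h : u ∈ TCset x) : TCset u ⊆ TCset x := by
  induction u using ZFSet.inductionOn with
  | _ u ih =>
    intro w hw
    rcases mem_TCset.1 hw with h1 | ⟨z, hz, h1⟩
    · exact TCset_trans h h1
    · exact ih z hz (TCset_trans h hz) h1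

theorem TCset_mono {s t : ZFSet} (h : ∀ b ∈ s, b ∈ t) : TCset s ⊆ TCset t := by
  intro w hw
  rcases mem_TCset.1 hw with h1 | ⟨z, hz, h1⟩
  · exact mem_TCset_of_mem (h _ h1)
  · exact TCset_subset_of_mem (mem_TCset_of_mem (h _ hz)) h1

theorem toSet_TCset (x : ZFSet) :
    (TCset x).toSet = x.toSet ∪ ⋃ y ∈ x.toSet, (TCset y).toSet := by
  ext w
  simp only [Set.mem_union, Set.mem_iUnion, ZFSet.mem_toSet, exists_prop]
  exact mem_TCset

theorem isHF_of_mem_TCset {x y : ZFSet} (hx : IsHF x) (h : y ∈ TCset x) : IsHF y :=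
  hx.subset (fun w hw => TCset_subset_of_mem h hw)

theorem isHF_of_mem {x y : ZFSet} (hx : IsHF x) (h : y ∈ x) : IsHF y :=
  isHF_of_mem_TCset hx (mem_TCset_of_mem h)

theorem toSet_finite_of_isHF {x : ZFSet} (hx : IsHF x) : x.toSet.Finite :=
  hx.subset (fun w hw => mem_TCset_of_mem hw)

theorem isHF_of_finite {x : ZFSet} (h1 : x.toSet.Finite) (h2 : ∀ y ∈ x, IsHF y) : IsHF x := by
  unfold IsHF
  rw [toSet_TCset]
  exact h1.union (Set.Finite.biUnion h1 (fun y hy => h2 y hy))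

theorem isHF_empty : IsHF ∅ := by
  apply isHF_of_finite
  · simp [ZFSet.toSet_empty]
  · intro y hy; exact absurd hy (ZFSet.notMem_empty y)

theorem isHF_insert {a s : ZFSet} (ha : IsHF a) (hs : IsHF s) : IsHF (insert a s) := by
  apply isHF_of_finite
  · rw [ZFSet.toSet_insert]; exact (toSet_finite_of_isHF hs).insert a
  · intro y hy
    rcases ZFSet.mem_insert_iff.1 hy with rfl | h
    · exact ha
    · exact isHF_of_mem hs h


/-! combinators -/

theorem pm_congr {m f g} (hf : PCSFminus m f) (h : f = g) : PCSFminus m g := h ▸ hf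

theorem pm_const_empty (m : ℕ) : PCSFminus m fun _ => ∅ :=
  PCSFminus.comp _ (fun i => i.elim0) PCSFminus.null (fun i => i.elim0)

theorem pm_pair {m f g} (hf : PCSFminus m f) (hg : PCSFminus m g) :
    PCSFminus m fun a => ({f a, g a} : ZFSet) := by
  have := PCSFminus.comp (fun a => ({a 0, a 1} : ZFSet)) ![f, g] PCSFminus.pair
    (fun i => by fin_cases i <;> simpa)
  apply pm_congr this
  funext a
  simp

theorem pm_sUnion {m f} (hf : PCSFminus m f) : PCSFminus m fun a => ZFSet.sUnion (f a) := by
  have := PCSFminus.comp (fun a => ZFSet.sUnion (a 0)) ![f] PCSFminus.union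
    (fun i => by fin_cases i <;> simpa)
  apply pm_congr this
  funext a
  simp

theorem pm_cond {m f g c d} (hf : PCSFminus m f) (hg : PCSFminus m g)
    (hc : PCSFminus m c) (hd : PCSFminus m d) :
    PCSFminus m fun a => if c a ∈ d a then f a else g a := by
  have := PCSFminus.comp (fun a => if a 2 ∈ a 3 then a 0 else a 1) ![f, g, c, d]
    PCSFminus.cond (fun i => by fin_cases i <;> simpa)
  apply pm_congr this
  funext a
  simp

theorem pm_sep {m} {h : (Fin (m+1) → ZFSet) → ZFSet} {g : (Fin m → ZFSet) → ZFSet}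
    (hh : PCSFminus (m+1) h) (hg : PCSFminus m g) :
    PCSFminus m fun a => ZFSet.sep (fun b => h (Fin.snoc a b) ≠ ∅) (g a) := by
  have S := PCSFminus.sep h hh
  set t : Fin (m+1) → (Fin m → ZFSet) → ZFSet :=
    Fin.snoc (fun (j : Fin m) (a : Fin m → ZFSet) => a j) g with ht
  have := PCSFminus.comp _ t S
    (fun i => by
      refine Fin.lastCases ?_ ?_ i
      · simpa [ht] using hg
      · intro j; simpa [ht] using PCSFminus.proj j)
  apply pm_congr this
  funext a
  have h1 : Fin.init (fun i => t i a) = a := by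
    funext j
    simp [ht, Fin.init]
  have h2 : (fun i => t i a) (Fin.last m) = g a := by
    simp [ht]
  rw [h1, h2]

/-! ## characteristic values -/

universe u

def chi (P : Prop) : ZFSet.{u} := if P then {∅} else ∅

theorem chi_ne {P : Prop} : chi P ≠ ∅ ↔ P := by
  unfold chi
  split_ifs with h
  · simp only [ne_eq, iff_true, h]
    intro he
    have hm : (∅ : ZFSet) ∈ ({∅} : ZFSet) := ZFSet.mem_singleton.2 rfl
    rw [he] at hm
    exact ZFSet.notMem_empty ∅ hm
  · simp [h]

theorem pm_const_one (m : ℕ) : PCSFminus m fun _ => ({∅} : ZFSet) := by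
  apply pm_congr (pm_pair (pm_const_empty m) (pm_const_empty m))
  funext a
  apply ZFSet.ext; intro z
  simp [ZFSet.mem_insert_iff, ZFSet.mem_singleton]

theorem pm_chi_mem {m c d} (hc : PCSFminus m c) (hd : PCSFminus m d) :
    PCSFminus m fun a => chi (c a ∈ d a) :=
  pm_cond (pm_const_one m) (pm_const_empty m) hc hd

theorem pm_chi_not_mem {m c d} (hc : PCSFminus m c) (hd : PCSFminus m d) :
    PCSFminus m fun a => chi (c a ∉ d a) := by
  apply pm_congr (pm_cond (pm_const_empty m) (pm_const_one m) hc hd)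
  funext a
  unfold chi
  by_cases h : c a ∈ d a <;> simp [h]

theorem pm_chi_empty {m f} (hf : PCSFminus m f) :
    PCSFminus m fun a => chi (f a = ∅) := by
  have hd : PCSFminus m fun a => ({f a, f a} : ZFSet) := pm_pair hf hf
  apply pm_congr (pm_cond (pm_const_one m) (pm_const_empty m) (pm_const_empty m) hd)
  funext a
  unfold chi
  have : (∅ : ZFSet) ∈ ({f a, f a} : ZFSet) ↔ f a = ∅ := by
    simp [ZFSet.mem_insert_iff, ZFSet.mem_singleton, eq_comm]
  exact if_congr this rfl rfl

/-- the "not subset" witness set `{z ∈ s : z ∉ t}` -/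
def nsub (s t : ZFSet.{u}) : ZFSet.{u} := ZFSet.sep (fun z => chi.{u} (z ∉ t) ≠ ∅) s

theorem nsub_eq_empty {s t : ZFSet} : nsub s t = ∅ ↔ s ⊆ t := by
  unfold nsub
  rw [ZFSet.eq_empty, ZFSet.subset_def]
  constructor
  · intro h z hz
    by_contra hzt
    exact h z (ZFSet.mem_sep.2 ⟨hz, chi_ne.2 hzt⟩)
  · intro h z hz
    rcases ZFSet.mem_sep.1 hz with ⟨h1, h2⟩
    exact chi_ne.1 h2 (h h1)

theorem pm_nsub {m f g} (hf : PCSFminus m f) (hg : PCSFminus m g) :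
    PCSFminus m fun a => nsub (f a) (g a) := by
  have hh : PCSFminus (m+1) fun v => chi (v (Fin.last m) ∉ g (Fin.init v)) := by
    have := pm_chi_not_mem (m := m+1) (PCSFminus.proj (Fin.last m))
      (PCSFminus.comp g (fun (j : Fin m) (v : Fin (m+1) → ZFSet) => v j.castSucc) hg
        (fun j => PCSFminus.proj j.castSucc))
    exact this
  apply pm_congr (pm_sep hh hf)
  funext a
  apply ZFSet.ext; intro z
  simp only [nsub, ZFSet.mem_sep, Fin.init_snoc, Fin.snoc_last]

theorem pm_chi_subset {m f g} (hf : PCSFminus m f) (hg : PCSFminus m g) :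
    PCSFminus m fun a => chi (f a ⊆ g a) := by
  apply pm_congr (pm_chi_empty (pm_nsub hf hg))
  funext a
  congr 1
  simp [nsub_eq_empty]

theorem pm_chi_eq {m f g} (hf : PCSFminus m f) (hg : PCSFminus m g) :
    PCSFminus m fun a => chi (f a = g a) := by
  have h1 : PCSFminus m fun a => chi (f a ⊆ g a) := pm_chi_subset hf hg
  have h2 : PCSFminus m fun a => chi (g a ⊆ f a) := pm_chi_subset hg hf
  -- and: if ∅ ∈ chi P then chi Q else ∅
  apply pm_congr (pm_cond h2 (pm_const_empty m) (pm_const_empty m) h1)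
  funext a
  have hmem : (∅ : ZFSet) ∈ chi (f a ⊆ g a) ↔ f a ⊆ g a := by
    unfold chi
    split_ifs with h
    · simpa [ZFSet.mem_singleton] using h
    · simpa [ZFSet.notMem_empty] using h
  by_cases hfg : f a ⊆ g a
  · rw [if_pos (hmem.2 hfg)]
    unfold chi
    by_cases hgf : g a ⊆ f a
    · rw [if_pos hgf, if_pos (ZFSet.ext fun z => ⟨fun hz => hfg hz, fun hz => hgf hz⟩)]
    · rw [if_neg hgf,
        if_neg (fun he : f a = g a => hgf (fun z hz => by rw [he]; exact hz))]
  · rw [if_neg (fun hc => hfg (hmem.1 hc))]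
    unfold chi
    rw [if_neg (fun he : f a = g a => hfg (fun z hz => by rw [← he]; exact hz))]

theorem pm_singleton {m f} (hf : PCSFminus m f) :
    PCSFminus m fun a => ({f a} : ZFSet) := by
  apply pm_congr (pm_pair hf hf)
  funext a
  apply ZFSet.ext; intro z
  simp [ZFSet.mem_insert_iff, ZFSet.mem_singleton]


theorem pm_kpair {m f g} (hf : PCSFminus m f) (hg : PCSFminus m g) :
    PCSFminus m fun a => kpair (f a) (g a) :=
  pm_pair (pm_singleton hf) (pm_pair hf hg)

/-- `{v ∈ y : p = ⟨u,v⟩}` -/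
def innerSet (p u y : ZFSet.{u}) : ZFSet.{u} := ZFSet.sep (fun v => chi.{u} (p = kpair u v) ≠ ∅) y

theorem mem_innerSet {p u y v : ZFSet} : v ∈ innerSet p u y ↔ v ∈ y ∧ p = kpair u v := by
  simp only [innerSet, ZFSet.mem_sep, chi_ne]

theorem innerSet_ne {p u y : ZFSet} : innerSet p u y ≠ ∅ ↔ ∃ v ∈ y, p = kpair u v := by
  rw [ne_eq, ZFSet.eq_empty]
  push_neg
  simp only [mem_innerSet]

theorem pm_innerSet {m f g k} (hf : PCSFminus m f) (hg : PCSFminus m g)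
    (hk : PCSFminus m k) : PCSFminus m fun a => innerSet (f a) (g a) (k a) := by
  have hh : PCSFminus (m+1) fun v =>
      chi (f (Fin.init v) = kpair (g (Fin.init v)) (v (Fin.last m))) := by
    have hf' : PCSFminus (m+1) fun v => f (Fin.init v) :=
      PCSFminus.comp f (fun (j : Fin m) (v : Fin (m+1) → ZFSet) => v j.castSucc) hf
        (fun j => PCSFminus.proj j.castSucc)
    have hg' : PCSFminus (m+1) fun v => g (Fin.init v) :=
      PCSFminus.comp g (fun (j : Fin m) (v : Fin (m+1) → ZFSet) => v j.castSucc) hg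
        (fun j => PCSFminus.proj j.castSucc)
    exact pm_chi_eq hf' (pm_kpair hg' (PCSFminus.proj (Fin.last m)))
  apply pm_congr (pm_sep hh hk)
  funext a
  apply ZFSet.ext; intro z
  simp only [innerSet, ZFSet.mem_sep, Fin.init_snoc, Fin.snoc_last]

/-- `{u ∈ x : innerSet p u y ≠ ∅}` -/
def outerSet (p x y : ZFSet) : ZFSet := ZFSet.sep (fun u => innerSet p u y ≠ ∅) x

theorem outerSet_ne {p x y : ZFSet} :
    outerSet p x y ≠ ∅ ↔ ∃ u ∈ x, ∃ v ∈ y, p = kpair u v := by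
  rw [ne_eq, ZFSet.eq_empty]
  push_neg
  constructor
  · rintro ⟨u, hu⟩
    rcases ZFSet.mem_sep.1 hu with ⟨hux, hne⟩
    exact ⟨u, hux, innerSet_ne.1 hne⟩
  · rintro ⟨u, hux, hv⟩
    exact ⟨u, ZFSet.mem_sep.2 ⟨hux, innerSet_ne.2 hv⟩⟩

theorem pm_outerSet {m f g k} (hf : PCSFminus m f) (hg : PCSFminus m g)
    (hk : PCSFminus m k) : PCSFminus m fun a => outerSet (f a) (g a) (k a) := by
  have hh : PCSFminus (m+1) fun v =>
      innerSet (f (Fin.init v)) (v (Fin.last m)) (k (Fin.init v)) := by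
    have hf' : PCSFminus (m+1) fun v => f (Fin.init v) :=
      PCSFminus.comp f (fun (j : Fin m) (v : Fin (m+1) → ZFSet) => v j.castSucc) hf
        (fun j => PCSFminus.proj j.castSucc)
    have hk' : PCSFminus (m+1) fun v => k (Fin.init v) :=
      PCSFminus.comp k (fun (j : Fin m) (v : Fin (m+1) → ZFSet) => v j.castSucc) hk
        (fun j => PCSFminus.proj j.castSucc)
    exact pm_innerSet hf' (PCSFminus.proj (Fin.last m)) hk'
  apply pm_congr (pm_sep hh hg)
  funext a
  apply ZFSet.ext; intro z
  simp only [outerSet, ZFSet.mem_sep, Fin.init_snoc, Fin.snoc_last]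

/-- `{p ∈ s : outerSet p x y ≠ ∅}` -/
def finalSet (x y s : ZFSet) : ZFSet := ZFSet.sep (fun p => outerSet p x y ≠ ∅) s

theorem mem_finalSet {x y s p : ZFSet} :
    p ∈ finalSet x y s ↔ p ∈ s ∧ ∃ u ∈ x, ∃ v ∈ y, p = kpair u v := by
  simp only [finalSet, ZFSet.mem_sep, outerSet_ne]

theorem pm_finalSet {m f g k} (hf : PCSFminus m f) (hg : PCSFminus m g)
    (hk : PCSFminus m k) : PCSFminus m fun a => finalSet (f a) (g a) (k a) := by
  have hh : PCSFminus (m+1) fun v =>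
      outerSet (v (Fin.last m)) (f (Fin.init v)) (g (Fin.init v)) := by
    have hf' : PCSFminus (m+1) fun v => f (Fin.init v) :=
      PCSFminus.comp f (fun (j : Fin m) (v : Fin (m+1) → ZFSet) => v j.castSucc) hf
        (fun j => PCSFminus.proj j.castSucc)
    have hg' : PCSFminus (m+1) fun v => g (Fin.init v) :=
      PCSFminus.comp g (fun (j : Fin m) (v : Fin (m+1) → ZFSet) => v j.castSucc) hg
        (fun j => PCSFminus.proj j.castSucc)
    exact pm_outerSet (PCSFminus.proj (Fin.last m)) hf' hg'
  apply pm_congr (pm_sep hh hk)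
  funext a
  apply ZFSet.ext; intro z
  simp only [finalSet, ZFSet.mem_sep, Fin.init_snoc, Fin.snoc_last]

/-- `{p ∈ s : innerSet p u y ≠ ∅}` (for the singleton product) -/
def singSet (u y s : ZFSet) : ZFSet := ZFSet.sep (fun p => innerSet p u y ≠ ∅) s

theorem mem_singSet {u y s p : ZFSet} :
    p ∈ singSet u y s ↔ p ∈ s ∧ ∃ v ∈ y, p = kpair u v := by
  simp only [singSet, ZFSet.mem_sep, innerSet_ne]

theorem pm_singSet {m f g k} (hf : PCSFminus m f) (hg : PCSFminus m g)
    (hk : PCSFminus m k) : PCSFminus m fun a => singSet (f a) (g a) (k a) := by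
  have hh : PCSFminus (m+1) fun v =>
      innerSet (v (Fin.last m)) (f (Fin.init v)) (g (Fin.init v)) := by
    have hf' : PCSFminus (m+1) fun v => f (Fin.init v) :=
      PCSFminus.comp f (fun (j : Fin m) (v : Fin (m+1) → ZFSet) => v j.castSucc) hf
        (fun j => PCSFminus.proj j.castSucc)
    have hg' : PCSFminus (m+1) fun v => g (Fin.init v) :=
      PCSFminus.comp g (fun (j : Fin m) (v : Fin (m+1) → ZFSet) => v j.castSucc) hg
        (fun j => PCSFminus.proj j.castSucc)
    exact pm_innerSet (PCSFminus.proj (Fin.last m)) hf' hg'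
  apply pm_congr (pm_sep hh hk)
  funext a
  apply ZFSet.ext; intro z
  simp only [singSet, ZFSet.mem_sep, Fin.init_snoc, Fin.snoc_last]

/-- binary union via `⋃₀{s,t}` -/
def uTwo (s t : ZFSet) : ZFSet := ZFSet.sUnion {s, t}

theorem mem_uTwo {s t w : ZFSet} : w ∈ uTwo s t ↔ w ∈ s ∨ w ∈ t := by
  simp only [uTwo, ZFSet.mem_sUnion]
  constructor
  · rintro ⟨z, hz, hw⟩
    rcases ZFSet.mem_insert_iff.1 hz with rfl | hz
    · exact Or.inl hw
    · exact Or.inr (ZFSet.mem_singleton.1 hz ▸ hw)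
  · rintro (hw | hw)
    · exact ⟨s, ZFSet.mem_insert_iff.2 (Or.inl rfl), hw⟩
    · exact ⟨t, ZFSet.mem_insert_iff.2 (Or.inr (ZFSet.mem_singleton.2 rfl)), hw⟩

theorem pm_uTwo {m f g} (hf : PCSFminus m f) (hg : PCSFminus m g) :
    PCSFminus m fun a => uTwo (f a) (g a) :=
  pm_sUnion (pm_pair hf hg)


/-! ## Section C : PCSF-level plumbing -/

theorem pc_congr {n m f g} (hf : PCSF n m f) (h : f = g) : PCSF n m g := h ▸ hf

theorem pc_ofPM {n m k} {g} (hg : PCSFminus k g)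
    {t : Fin k → (Fin n → ZFSet) → (Fin m → ZFSet) → ZFSet} (ht : ∀ i, PCSF n m (t i)) :
    PCSF n m fun x a => g (fun i => t i x a) :=
  PCSF.comp (fun (_ : Fin 0 → ZFSet) a => g a) (fun i => i.elim0) t
    (PCSF.ofMinus g hg) (fun i => i.elim0) ht

theorem pc_projN {n m} (j : Fin n) : PCSF n m fun x _ => x j := by
  apply pc_congr (PCSF.proj (Fin.castAdd m j))
  funext x a
  rw [Fin.append_left]

theorem pc_projS {n m} (j : Fin m) : PCSF n m fun _ a => a j := by
  apply pc_congr (PCSF.proj (Fin.natAdd n j))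
  funext x a
  rw [Fin.append_right]

theorem fin0_eq (v : Fin 0 → ZFSet) : v = Fin.elim0 := funext fun i => i.elim0

theorem pc_substN {n m k f} (hf : PCSF k 0 f) (σ : Fin k → Fin n) :
    PCSF n m fun x _ => f (fun i => x (σ i)) Fin.elim0 := by
  have := PCSF.comp (n := n) (m := m) f (fun i x (_ : Fin 0 → ZFSet) => x (σ i))
    (fun (i : Fin 0) => Fin.elim0 (α := (Fin n → ZFSet) → (Fin m → ZFSet) → ZFSet) i)
    hf (fun i => pc_projN (σ i)) (fun i => i.elim0)
  apply pc_congr this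
  funext x a
  exact congrArg (f _) (fin0_eq _)

/-! ## The recursion `Hfun u y = {⟨u,v⟩ : v ∈ TC'(y)}` -/

noncomputable def Hfun (u : ZFSet) : ZFSet → ZFSet :=
  ZFSet.mem_wf.fix fun y ih =>
    uTwo {kpair u y}
      (ZFSet.sUnion (zImage (fun z => if h : z ∈ y then ih z h else ∅) y))

theorem Hfun_eq (u y : ZFSet) :
    Hfun u y = uTwo {kpair u y} (ZFSet.sUnion (zImage (fun z => Hfun u z) y)) := by
  have h := WellFounded.fix_eq ZFSet.mem_wf (fun y ih =>
    uTwo {kpair u y}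
      (ZFSet.sUnion (zImage (fun z => if h : z ∈ y then ih z h else ∅) y))) y
  show ZFSet.mem_wf.fix _ y = _
  rw [h]
  congr 2
  apply zImage_congr
  intro z hz
  rw [dif_pos hz]
  rfl

theorem mem_Hfun {u y p : ZFSet} :
    p ∈ Hfun u y ↔ p = kpair u y ∨ ∃ z ∈ y, p ∈ Hfun u z := by
  rw [Hfun_eq, mem_uTwo, ZFSet.mem_singleton, ZFSet.mem_sUnion]
  constructor
  · rintro (h | ⟨w, hw, hp⟩)
    · exact Or.inl h
    · rcases mem_zImage.1 hw with ⟨z, hz, rfl⟩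
      exact Or.inr ⟨z, hz, hp⟩
  · rintro (h | ⟨z, hz, hp⟩)
    · exact Or.inl h
    · exact Or.inr ⟨Hfun u z, mem_zImage.2 ⟨z, hz, rfl⟩, hp⟩

theorem kpair_mem_Hfun {u y v : ZFSet} (hv : v ∈ y) : kpair u v ∈ Hfun u y :=
  mem_Hfun.2 (Or.inr ⟨v, hv, mem_Hfun.2 (Or.inl rfl)⟩)

theorem pc_Hfun : PCSF 2 0 fun x _ => Hfun (x 1) (x 0) := by
  apply PCSF.recur (fun x a => uTwo {kpair (x 1) (x 0)} (ZFSet.sUnion (a 0)))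
  · have hg : PCSFminus 3 fun b => uTwo {kpair (b 0) (b 1)} (ZFSet.sUnion (b 2)) :=
      pm_uTwo (pm_singleton (pm_kpair (PCSFminus.proj 0) (PCSFminus.proj 1)))
        (pm_sUnion (PCSFminus.proj 2))
    have := pc_ofPM hg
      (t := ![fun (x : Fin 2 → ZFSet) (_ : Fin 1 → ZFSet) => x 1,
        fun x _ => x 0, fun _ a => a 0])
      (by
        intro i
        fin_cases i
        · show PCSF 2 1 fun x _ => x 1; exact pc_projN 1
        · show PCSF 2 1 fun x _ => x 0; exact pc_projN 0
        · show PCSF 2 1 fun _ a => a 0; exact pc_projS 0)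
    apply pc_congr this
    funext x a
    simp [Matrix.cons_val_zero, Matrix.cons_val_one, Matrix.head_cons]
  · intro x y a
    have h0 : (Fin.cons x y : Fin 2 → ZFSet) 0 = x := rfl
    have h1 : (Fin.cons x y : Fin 2 → ZFSet) 1 = y 0 := rfl
    have hs : (Fin.snoc a (zImage (fun z => Hfun ((Fin.cons z y : Fin 2 → ZFSet) 1)
        ((Fin.cons z y : Fin 2 → ZFSet) 0)) x) : Fin 1 → ZFSet) 0
        = zImage (fun z => Hfun (y 0) z) x := rfl
    rw [h0, h1, hs]
    exact Hfun_eq (y 0) x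

/-! ## singleton product -/

noncomputable def singProdVal (u y : ZFSet) : ZFSet := singSet u y (Hfun u y)

theorem mem_singProdVal {u y p : ZFSet} :
    p ∈ singProdVal u y ↔ ∃ v ∈ y, p = kpair u v := by
  rw [singProdVal, mem_singSet]
  constructor
  · rintro ⟨_, h⟩; exact h
  · rintro ⟨v, hv, rfl⟩
    exact ⟨kpair_mem_Hfun hv, v, hv, rfl⟩

theorem pc_singProd : PCSF 2 0 fun x _ => singProdVal (x 1) (x 0) := by
  have := pc_ofPM (pm_singSet (PCSFminus.proj 0) (PCSFminus.proj 1) (PCSFminus.proj 2))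
    (t := ![fun (x : Fin 2 → ZFSet) (_ : Fin 0 → ZFSet) => x 1,
      fun x _ => x 0, fun x _ => Hfun (x 1) (x 0)])
    (by
      intro i
      fin_cases i
      · show PCSF 2 0 fun x _ => x 1; exact pc_projN 1
      · show PCSF 2 0 fun x _ => x 0; exact pc_projN 0
      · show PCSF 2 0 fun x _ => Hfun (x 1) (x 0); exact pc_Hfun)
  apply pc_congr this
  funext x a
  simp [singProdVal]

theorem pc_singProd' {m : ℕ} : PCSF 2 m fun x _ => singProdVal (x 0) (x 1) := by
  have := pc_substN (m := m) pc_singProd (![1, 0] : Fin 2 → Fin 2)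
  apply pc_congr this
  funext x a
  simp

/-! ## the big recursion `Lfun y x ⊇ x × y` -/

noncomputable def Lfun (y : ZFSet) : ZFSet → ZFSet :=
  ZFSet.mem_wf.fix fun x ih =>
    uTwo (singProdVal x y)
      (ZFSet.sUnion (zImage (fun z => if h : z ∈ x then ih z h else ∅) x))

theorem Lfun_eq (y x : ZFSet) :
    Lfun y x = uTwo (singProdVal x y) (ZFSet.sUnion (zImage (fun z => Lfun y z) x)) := by
  have h := WellFounded.fix_eq ZFSet.mem_wf (fun x ih =>
    uTwo (singProdVal x y)
      (ZFSet.sUnion (zImage (fun z => if h : z ∈ x then ih z h else ∅) x))) x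
  show ZFSet.mem_wf.fix _ x = _
  rw [h]
  congr 2
  apply zImage_congr
  intro z hz
  rw [dif_pos hz]
  rfl

theorem kpair_mem_Lfun {u x v y : ZFSet} (hu : u ∈ x) (hv : v ∈ y) :
    kpair u v ∈ Lfun y x := by
  rw [Lfun_eq, mem_uTwo]
  refine Or.inr (ZFSet.mem_sUnion.2 ⟨Lfun y u, mem_zImage.2 ⟨u, hu, rfl⟩, ?_⟩)
  rw [Lfun_eq, mem_uTwo]
  exact Or.inl (mem_singProdVal.2 ⟨v, hv, rfl⟩)

theorem pc_Lfun : PCSF 2 0 fun x _ => Lfun (x 1) (x 0) := by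
  apply PCSF.recur (fun x a => uTwo (singProdVal (x 0) (x 1)) (ZFSet.sUnion (a 0)))
  · have hg : PCSFminus 2 fun b => uTwo (b 0) (ZFSet.sUnion (b 1)) :=
      pm_uTwo (PCSFminus.proj 0) (pm_sUnion (PCSFminus.proj 1))
    have := pc_ofPM hg
      (t := ![fun (x : Fin 2 → ZFSet) (_ : Fin 1 → ZFSet) => singProdVal (x 0) (x 1),
        fun _ a => a 0])
      (by
        intro i
        fin_cases i
        · show PCSF 2 1 fun x _ => singProdVal (x 0) (x 1); exact pc_singProd'
        · show PCSF 2 1 fun _ a => a 0; exact pc_projS 0)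
    apply pc_congr this
    funext x a
    simp
  · intro x y a
    have h0 : (Fin.cons x y : Fin 2 → ZFSet) 0 = x := rfl
    have h1 : (Fin.cons x y : Fin 2 → ZFSet) 1 = y 0 := rfl
    have hs : (Fin.snoc a (zImage (fun z => Lfun ((Fin.cons z y : Fin 2 → ZFSet) 1)
        ((Fin.cons z y : Fin 2 → ZFSet) 0)) x) : Fin 1 → ZFSet) 0
        = zImage (fun z => Lfun (y 0) z) x := rfl
    rw [h0, h1, hs]
    exact Lfun_eq (y 0) x

/-! ## the product with normal arguments -/

theorem mem_zProd {a b p : ZFSet} :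
    p ∈ zProd a b ↔ ∃ u ∈ a, ∃ v ∈ b, p = kpair u v := by
  rw [zProd, ZFSet.mem_sUnion]
  constructor
  · rintro ⟨w, hw, hp⟩
    rcases mem_zImage.1 hw with ⟨u, hu, rfl⟩
    rcases mem_zImage.1 hp with ⟨v, hv, hk⟩
    exact ⟨u, hu, v, hv, hk.symm⟩
  · rintro ⟨u, hu, v, hv, rfl⟩
    exact ⟨zImage (fun v => kpair u v) b, mem_zImage.2 ⟨u, hu, rfl⟩,
      mem_zImage.2 ⟨v, hv, rfl⟩⟩

theorem pc_prodNormal : PCSF 2 0 fun x _ => zProd (x 0) (x 1) := by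
  have := pc_ofPM (pm_finalSet (PCSFminus.proj 0) (PCSFminus.proj 1) (PCSFminus.proj 2))
    (t := ![fun (x : Fin 2 → ZFSet) (_ : Fin 0 → ZFSet) => x 0,
      fun x _ => x 1, fun x _ => Lfun (x 1) (x 0)])
    (by
      intro i
      fin_cases i
      · show PCSF 2 0 fun x _ => x 0; exact pc_projN 0
      · show PCSF 2 0 fun x _ => x 1; exact pc_projN 1
      · show PCSF 2 0 fun x _ => Lfun (x 1) (x 0); exact pc_Lfun)
  apply pc_congr this
  funext x a
  have : finalSet (x 0) (x 1) (Lfun (x 1) (x 0)) = zProd (x 0) (x 1) := by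
    apply ZFSet.ext; intro p
    rw [mem_finalSet, mem_zProd]
    constructor
    · rintro ⟨_, h⟩; exact h
    · rintro ⟨u, hu, v, hv, rfl⟩
      exact ⟨kpair_mem_Lfun hu hv, u, hu, v, hv, rfl⟩
  simpa using this


/-! ## Section D : the growth bound -/

theorem TCset_empty : TCset ∅ = ∅ := by
  apply ZFSet.ext; intro w
  constructor
  · intro h
    rcases mem_TCset.1 h with h | ⟨y, hy, _⟩
    · exact absurd h (ZFSet.notMem_empty w)
    · exact absurd hy (ZFSet.notMem_empty y)
  · intro h; exact absurd h (ZFSet.notMem_empty w)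

theorem ncard_iUnion_fin_le : ∀ {k : ℕ} (S : Fin k → Set ZFSet),
    (⋃ i, S i).ncard ≤ ∑ i, (S i).ncard := by
  intro k
  induction k with
  | zero => intro S; simp
  | succ k ih =>
    intro S
    have he : (⋃ i, S i) = S 0 ∪ ⋃ i : Fin k, S i.succ := by
      ext w
      simp only [Set.mem_iUnion, Set.mem_union]
      constructor
      · rintro ⟨i, hi⟩
        rcases Fin.eq_zero_or_eq_succ i with rfl | ⟨j, rfl⟩
        · exact Or.inl hi
        · exact Or.inr ⟨j, hi⟩
      · rintro (h | ⟨j, hj⟩)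
        · exact ⟨0, h⟩
        · exact ⟨j.succ, hj⟩
    rw [he, Fin.sum_univ_succ]
    exact le_trans (Set.ncard_union_le _ _) (Nat.add_le_add le_rfl (ih _))

theorem ncard_biUnion_finset_le (F : Finset ZFSet) (S : ZFSet → Set ZFSet) :
    (⋃ z ∈ (F : Set ZFSet), S z).ncard ≤ ∑ z ∈ F, (S z).ncard := by
  induction F using Finset.induction_on with
  | empty => simp
  | @insert a F ha ih =>
    rw [Finset.coe_insert, Set.biUnion_insert, Finset.sum_insert ha]
    exact le_trans (Set.ncard_union_le _ _) (Nat.add_le_add le_rfl ih)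

/-- counting lemma for composition-like situations -/
theorem comp_count {l : ℕ} {A U : Set ZFSet} (hA : A.Finite)
    {b : Fin l → Set ZFSet} (hb : ∀ i, (b i).Finite) {Ch : ℕ} {Ct : Fin l → ℕ}
    (h1 : (A \ ⋃ i, b i).ncard ≤ Ch) (h2 : ∀ i, (b i \ U).ncard ≤ Ct i) :
    (A \ U).ncard ≤ Ch + ∑ i, Ct i := by
  have hsub : A \ U ⊆ (A \ ⋃ i, b i) ∪ ⋃ i, (b i \ U) := by
    rintro w ⟨hwA, hwU⟩
    by_cases hwb : w ∈ ⋃ i, b i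
    · rcases Set.mem_iUnion.1 hwb with ⟨i, hi⟩
      exact Or.inr (Set.mem_iUnion.2 ⟨i, hi, hwU⟩)
    · exact Or.inl ⟨hwA, hwb⟩
  have hfin : ((A \ ⋃ i, b i) ∪ ⋃ i, (b i \ U)).Finite :=
    (hA.diff).union (Set.finite_iUnion fun i => (hb i).diff)
  calc (A \ U).ncard ≤ ((A \ ⋃ i, b i) ∪ ⋃ i, (b i \ U)).ncard :=
        Set.ncard_le_ncard hsub hfin
    _ ≤ (A \ ⋃ i, b i).ncard + (⋃ i, (b i \ U)).ncard := Set.ncard_union_le _ _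
    _ ≤ Ch + ∑ i, Ct i := Nat.add_le_add h1
        (le_trans (ncard_iUnion_fin_le _) (Finset.sum_le_sum fun i _ => h2 i))

theorem pm_growth {m f} (hf : PCSFminus m f) :
    ∃ C : ℕ, ∀ a : Fin m → ZFSet, (∀ i, IsHF (a i)) →
      IsHF (f a) ∧ ((TCset (f a)).toSet \ ⋃ i, (TCset (a i)).toSet).ncard ≤ C := by
  induction hf with
  | proj j =>
    refine ⟨0, fun a ha => ⟨ha j, ?_⟩⟩
    have : (TCset (a j)).toSet \ ⋃ i, (TCset (a i)).toSet = ∅ :=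
      Set.diff_eq_empty.2 (Set.subset_iUnion (fun i => (TCset (a i)).toSet) j)
    simp [this]
  | pair =>
    refine ⟨2, fun a ha => ?_⟩
    have hHF : IsHF ({a 0, a 1} : ZFSet) := by
      apply isHF_of_finite
      · rw [ZFSet.toSet_insert, ZFSet.toSet_singleton]
        exact (Set.finite_singleton _).insert _
      · intro y hy
        rcases ZFSet.mem_insert_iff.1 hy with rfl | hy
        · exact ha 0
        · rw [ZFSet.mem_singleton.1 hy]; exact ha 1
    refine ⟨hHF, ?_⟩
    have hsub : (TCset ({a 0, a 1} : ZFSet)).toSet \ ⋃ i, (TCset (a i)).toSet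
        ⊆ {a 0, a 1} := by
      rintro w ⟨hw, hwU⟩
      rw [ZFSet.mem_toSet] at hw
      rcases mem_TCset.1 hw with h | ⟨y, hy, h⟩
      · rcases ZFSet.mem_insert_iff.1 h with rfl | h
        · exact Or.inl rfl
        · exact Or.inr (ZFSet.mem_singleton.1 h)
      · exfalso; apply hwU
        rcases ZFSet.mem_insert_iff.1 hy with rfl | hy
        · exact Set.mem_iUnion.2 ⟨0, h⟩
        · rw [ZFSet.mem_singleton.1 hy] at h
          exact Set.mem_iUnion.2 ⟨1, h⟩
    calc _ ≤ ({a 0, a 1} : Set ZFSet).ncard := Set.ncard_le_ncard hsub (Set.toFinite _)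
      _ ≤ 2 := by
          refine le_trans (Set.ncard_insert_le _ _) ?_
          simp
  | null =>
    refine ⟨0, fun a ha => ⟨isHF_empty, ?_⟩⟩
    simp [TCset_empty, ZFSet.toSet_empty]
  | union =>
    refine ⟨0, fun a ha => ?_⟩
    have hsub : (TCset (ZFSet.sUnion (a 0))).toSet ⊆ (TCset (a 0)).toSet := by
      intro w hw
      rw [ZFSet.mem_toSet] at hw ⊢
      rcases mem_TCset.1 hw with h | ⟨y, hy, h⟩
      · rcases ZFSet.mem_sUnion.1 h with ⟨z, hz, hwz⟩
        exact TCset_trans (mem_TCset_of_mem hz) hwz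
      · rcases ZFSet.mem_sUnion.1 hy with ⟨z, hz, hyz⟩
        exact TCset_subset_of_mem (TCset_trans (mem_TCset_of_mem hz) hyz) h
    refine ⟨(ha 0).subset hsub, ?_⟩
    have : (TCset (ZFSet.sUnion (a 0))).toSet \ ⋃ i, (TCset (a i)).toSet = ∅ :=
      Set.diff_eq_empty.2
        (hsub.trans (Set.subset_iUnion (fun i => (TCset (a i)).toSet) 0))
    simp [this]
  | cond =>
    refine ⟨0, fun a ha => ?_⟩
    by_cases hc : a 2 ∈ a 3
    · simp only [if_pos hc]
      refine ⟨ha 0, ?_⟩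
      have : (TCset (a 0)).toSet \ ⋃ i, (TCset (a i)).toSet = ∅ :=
        Set.diff_eq_empty.2 (Set.subset_iUnion (fun i => (TCset (a i)).toSet) 0)
      simp [this]
    · simp only [if_neg hc]
      refine ⟨ha 1, ?_⟩
      have : (TCset (a 1)).toSet \ ⋃ i, (TCset (a i)).toSet = ∅ :=
        Set.diff_eq_empty.2 (Set.subset_iUnion (fun i => (TCset (a i)).toSet) 1)
      simp [this]
  | comp h t hh ht IHh IHt =>
    obtain ⟨Ch, hCh⟩ := IHh
    choose Ct hCt using IHt
    refine ⟨Ch + ∑ i, Ct i, fun a ha => ?_⟩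
    have hb : ∀ i, IsHF (t i a) := fun i => (hCt i a ha).1
    obtain ⟨hHF, hD⟩ := hCh (fun i => t i a) hb
    refine ⟨hHF, ?_⟩
    exact comp_count hHF (fun i => hb i) hD (fun i => (hCt i a ha).2)
  | sep h hh IHh =>
    refine ⟨0, fun a ha => ?_⟩
    have hsub1 : ∀ b ∈ ZFSet.sep (fun b => h (Fin.snoc (Fin.init a) b) ≠ ∅)
        (a (Fin.last _)), b ∈ a (Fin.last _) := fun b hb => (ZFSet.mem_sep.1 hb).1
    have hsub : (TCset (ZFSet.sep (fun b => h (Fin.snoc (Fin.init a) b) ≠ ∅)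
        (a (Fin.last _)))).toSet ⊆ (TCset (a (Fin.last _))).toSet := by
      intro w hw
      rw [ZFSet.mem_toSet] at hw ⊢
      exact TCset_mono hsub1 hw
    refine ⟨(ha _).subset hsub, ?_⟩
    have : (TCset _).toSet \ ⋃ i, (TCset (a i)).toSet = ∅ :=
      Set.diff_eq_empty.2
        (hsub.trans (Set.subset_iUnion (fun i => (TCset (a i)).toSet) (Fin.last _)))
    simp [this]

theorem pc_growth {n m f} (hf : PCSF n m f) :
    ∀ x : Fin n → ZFSet, (∀ j, IsHF (x j)) →
      ∃ C : ℕ, ∀ a : Fin m → ZFSet, (∀ i, IsHF (a i)) →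
        IsHF (f x a) ∧ ((TCset (f x a)).toSet \ ⋃ i, (TCset (a i)).toSet).ncard ≤ C := by
  induction hf with
  | ofMinus h hm =>
    intro x hx
    obtain ⟨C, hC⟩ := pm_growth hm
    exact ⟨C, fun a ha => hC a ha⟩
  | @proj n m j =>
    intro x hx
    by_cases hj : (j : ℕ) < n
    · refine ⟨((TCset (x ⟨j, hj⟩)).toSet).ncard, fun a ha => ?_⟩
      have hje : j = Fin.castAdd m ⟨(j : ℕ), hj⟩ := by ext; rfl
      have hv : Fin.append x a j = x ⟨(j : ℕ), hj⟩ := by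
        conv_lhs => rw [hje]
        exact Fin.append_left x a _
      simp only [hv]
      exact ⟨hx _, Set.ncard_le_ncard Set.diff_subset (hx _)⟩
    · have hj' : (j : ℕ) - n < m := by
        have := j.isLt; omega
      refine ⟨0, fun a ha => ?_⟩
      have hje : j = Fin.natAdd n ⟨(j : ℕ) - n, hj'⟩ := by
        ext; simp; omega
      have hv : Fin.append x a j = a ⟨(j : ℕ) - n, hj'⟩ := by
        conv_lhs => rw [hje]
        exact Fin.append_right x a _
      simp only [hv]
      refine ⟨ha _, ?_⟩
      have : (TCset (a ⟨(j : ℕ) - n, hj'⟩)).toSet \ ⋃ i, (TCset (a i)).toSet = ∅ :=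
        Set.diff_eq_empty.2 (Set.subset_iUnion (fun i => (TCset (a i)).toSet) _)
      simp [this]
  | comp h r t hh hr ht IHh IHr IHt =>
    intro x hx
    have hxr : ∀ i, IsHF (r i x Fin.elim0) := by
      intro i
      obtain ⟨C, hC⟩ := IHr i x hx
      exact (hC Fin.elim0 (fun i0 => i0.elim0)).1
    obtain ⟨Ch, hCh⟩ := IHh (fun i => r i x Fin.elim0) hxr
    choose Ct hCt using fun i => IHt i x hx
    refine ⟨Ch + ∑ i, Ct i, fun a ha => ?_⟩
    have hb : ∀ i, IsHF (t i x a) := fun i => (hCt i a ha).1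
    obtain ⟨hHF, hD⟩ := hCh (fun i => t i x a) hb
    exact ⟨hHF, comp_count hHF (fun i => hb i) hD (fun i => (hCt i a ha).2)⟩
  | @recur n m h g hh heq IHh =>
    intro xs hxs
    have main : ∀ x₀ : ZFSet, IsHF x₀ →
        ∃ C : ℕ, ∀ a, (∀ i, IsHF (a i)) →
          IsHF (g (Fin.cons x₀ (Fin.tail xs)) a) ∧
          ((TCset (g (Fin.cons x₀ (Fin.tail xs)) a)).toSet \
            ⋃ i, (TCset (a i)).toSet).ncard ≤ C := by
      intro x₀
      induction x₀ using ZFSet.inductionOn with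
      | _ x₀ IH =>
        intro hx₀
        have hcons : ∀ j, IsHF (Fin.cons x₀ (Fin.tail xs) j) := by
          intro j
          refine Fin.cases ?_ ?_ j
          · exact hx₀
          · intro j'; exact hxs j'.succ
        obtain ⟨Ch, hCh⟩ := IHh (Fin.cons x₀ (Fin.tail xs)) hcons
        have hfin : x₀.toSet.Finite := toSet_finite_of_isHF hx₀
        have IH' : ∀ z, z ∈ x₀ → ∃ C : ℕ, ∀ a, (∀ i, IsHF (a i)) →
            IsHF (g (Fin.cons z (Fin.tail xs)) a) ∧
            ((TCset (g (Fin.cons z (Fin.tail xs)) a)).toSet \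
              ⋃ i, (TCset (a i)).toSet).ncard ≤ C :=
          fun z hz => IH z hz (isHF_of_mem hx₀ hz)
        choose! CZ hCZ using IH'
        refine ⟨Ch + (x₀.toSet.ncard + ∑ z ∈ hfin.toFinset, CZ z), fun a ha => ?_⟩
        set P := zImage (fun z => g (Fin.cons z (Fin.tail xs)) a) x₀ with hP
        have hPfin : P.toSet.Finite := by
          rw [hP, toSet_zImage]
          exact hfin.image _
        have hPel : ∀ w ∈ P, IsHF w := by
          intro w hw
          rcases mem_zImage.1 hw with ⟨z, hz, rfl⟩
          exact (hCZ z hz a ha).1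
        have hPHF : IsHF P := isHF_of_finite hPfin hPel
        have hsnoc : ∀ i : Fin (m+1), IsHF (Fin.snoc (α := fun _ => ZFSet) a P i) := by
          intro i
          rcases Fin.eq_castSucc_or_eq_last i with ⟨j, rfl⟩ | rfl
          · rw [Fin.snoc_castSucc]; exact ha j
          · rw [Fin.snoc_last]; exact hPHF
        obtain ⟨hHF, hcnt⟩ := hCh (Fin.snoc a P) hsnoc
        rw [heq x₀ (Fin.tail xs) a]
        refine ⟨hHF, ?_⟩
        -- split the (m+1)-fold union
        have hU' : (⋃ i, (TCset (Fin.snoc (α := fun _ => ZFSet) a P i)).toSet) =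
            (⋃ i, (TCset (a i)).toSet) ∪ (TCset P).toSet := by
          ext w
          simp only [Set.mem_iUnion, Set.mem_union]
          constructor
          · rintro ⟨i, hi⟩
            rcases Fin.eq_castSucc_or_eq_last i with ⟨j, rfl⟩ | rfl
            · rw [Fin.snoc_castSucc] at hi
              exact Or.inl ⟨j, hi⟩
            · rw [Fin.snoc_last] at hi
              exact Or.inr hi
          · rintro (⟨j, hj⟩ | hw)
            · exact ⟨j.castSucc, by rw [Fin.snoc_castSucc]; exact hj⟩
            · exact ⟨Fin.last m, by rw [Fin.snoc_last]; exact hw⟩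
        rw [hU'] at hcnt
        have hTP : (TCset P).toSet ⊆ P.toSet ∪
            ⋃ z ∈ x₀.toSet, (TCset (g (Fin.cons z (Fin.tail xs)) a)).toSet := by
          intro w hw
          rw [ZFSet.mem_toSet] at hw
          rcases mem_TCset.1 hw with hw | ⟨q, hq, hw⟩
          · exact Or.inl hw
          · rcases mem_zImage.1 hq with ⟨z, hz, rfl⟩
            exact Or.inr (Set.mem_biUnion hz hw)
        set A := (TCset (h (Fin.cons x₀ (Fin.tail xs)) (Fin.snoc a P))).toSet with hA
        set U := ⋃ i, (TCset (a i)).toSet with hU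
        have hsub : A \ U ⊆ (A \ (U ∪ (TCset P).toSet)) ∪
            (P.toSet ∪ ⋃ z ∈ x₀.toSet,
              ((TCset (g (Fin.cons z (Fin.tail xs)) a)).toSet \ U)) := by
          rintro w ⟨hwA, hwU⟩
          by_cases hwP : w ∈ (TCset P).toSet
          · rcases hTP hwP with h1 | h1
            · exact Or.inr (Or.inl h1)
            · rcases Set.mem_iUnion₂.1 h1 with ⟨z, hz, hw⟩
              exact Or.inr (Or.inr (Set.mem_biUnion hz ⟨hw, hwU⟩))
          · refine Or.inl ⟨hwA, ?_⟩
            rintro (hc | hc)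
            · exact hwU hc
            · exact hwP hc
        have hgfin : ∀ z ∈ x₀.toSet,
            ((TCset (g (Fin.cons z (Fin.tail xs)) a)).toSet \ U).Finite := by
          intro z hz
          exact ((hCZ z hz a ha).1).diff
        have hBigFin : ((A \ (U ∪ (TCset P).toSet)) ∪
            (P.toSet ∪ ⋃ z ∈ x₀.toSet,
              ((TCset (g (Fin.cons z (Fin.tail xs)) a)).toSet \ U))).Finite :=
          ((hHF.diff).union (hPfin.union (Set.Finite.biUnion hfin hgfin)))
        calc (A \ U).ncard ≤ _ := Set.ncard_le_ncard hsub hBigFin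
          _ ≤ (A \ (U ∪ (TCset P).toSet)).ncard +
              (P.toSet ∪ ⋃ z ∈ x₀.toSet,
                ((TCset (g (Fin.cons z (Fin.tail xs)) a)).toSet \ U)).ncard :=
            Set.ncard_union_le _ _
          _ ≤ Ch + (x₀.toSet.ncard + ∑ z ∈ hfin.toFinset, CZ z) := by
            refine Nat.add_le_add hcnt ?_
            refine le_trans (Set.ncard_union_le _ _) (Nat.add_le_add ?_ ?_)
            · rw [hP, toSet_zImage]
              exact Set.ncard_image_le hfin
            · have hcoe : (⋃ z ∈ x₀.toSet,
                  ((TCset (g (Fin.cons z (Fin.tail xs)) a)).toSet \ U))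
                  = ⋃ z ∈ (hfin.toFinset : Set ZFSet),
                    ((TCset (g (Fin.cons z (Fin.tail xs)) a)).toSet \ U) := by
                rw [Set.Finite.coe_toFinset]
              rw [hcoe]
              refine le_trans (ncard_biUnion_finset_le _ _) (Finset.sum_le_sum ?_)
              intro z hz
              exact (hCZ z ((Set.Finite.mem_toFinset hfin).1 hz) a ha).2
    obtain ⟨C, hC⟩ := main (xs 0) (hxs 0)
    refine ⟨C, fun a ha => ?_⟩
    have h2 := hC a ha
    rwa [Fin.cons_self_tail] at h2


/-! ## Section E : the counterexamples -/

/-- iterated singletons -/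
def sIter : ℕ → ZFSet
  | 0 => ∅
  | n + 1 => {sIter n}

theorem isHF_sIter (n : ℕ) : IsHF (sIter n) := by
  induction n with
  | zero => exact isHF_empty
  | succ n ih => exact isHF_insert ih isHF_empty

theorem sIter_succ_ne_empty (n : ℕ) : sIter (n + 1) ≠ ∅ := by
  intro h
  have : sIter n ∈ sIter (n + 1) := ZFSet.mem_singleton.2 rfl
  rw [h] at this
  exact ZFSet.notMem_empty _ this

theorem zsingleton_inj {a b : ZFSet} (h : ({a} : ZFSet) = {b}) : a = b := by
  have : a ∈ ({a} : ZFSet) := ZFSet.mem_singleton.2 rfl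
  rw [h] at this
  exact ZFSet.mem_singleton.1 this

theorem sIter_ne_of_lt : ∀ i j : ℕ, i < j → sIter i ≠ sIter j := by
  intro i
  induction i with
  | zero =>
    intro j hj h
    obtain ⟨j', rfl⟩ : ∃ j', j = j' + 1 := ⟨j - 1, by omega⟩
    exact sIter_succ_ne_empty j' h.symm
  | succ i ih =>
    intro j hj h
    obtain ⟨j', rfl⟩ : ∃ j', j = j' + 1 := ⟨j - 1, by omega⟩
    exact ih j' (by omega) (zsingleton_inj h)

theorem sIter_inj : Function.Injective sIter := by
  intro i j h
  rcases lt_trichotomy i j with hij | hij | hij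
  · exact absurd h (sIter_ne_of_lt i j hij)
  · exact hij
  · exact absurd h.symm (sIter_ne_of_lt j i hij)

theorem mem_TCset_sIter : ∀ n, ∀ w ∈ TCset (sIter n), ∃ j, j < n ∧ w = sIter j := by
  intro n
  induction n with
  | zero =>
    intro w hw
    rw [show sIter 0 = ∅ from rfl, TCset_empty] at hw
    exact absurd hw (ZFSet.notMem_empty w)
  | succ n ih =>
    intro w hw
    rcases mem_TCset.1 hw with hw | ⟨y, hy, hw⟩
    · exact ⟨n, by omega, ZFSet.mem_singleton.1 hw⟩
    · rw [ZFSet.mem_singleton.1 hy] at hw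
      obtain ⟨j, hj, rfl⟩ := ih w hw
      exact ⟨j, by omega, rfl⟩

/-- the test sets `{s₁, …, s_k}` -/
def aK : ℕ → ZFSet
  | 0 => ∅
  | k + 1 => insert (sIter (k + 1)) (aK k)

theorem isHF_aK (k : ℕ) : IsHF (aK k) := by
  induction k with
  | zero => exact isHF_empty
  | succ k ih => exact isHF_insert (isHF_sIter (k + 1)) ih

theorem mem_aK {k : ℕ} {w : ZFSet} : w ∈ aK k ↔ ∃ i, 1 ≤ i ∧ i ≤ k ∧ w = sIter i := by
  induction k with
  | zero =>
    simp only [aK]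
    constructor
    · intro h; exact absurd h (ZFSet.notMem_empty w)
    · rintro ⟨i, h1, h2, _⟩; omega
  | succ k ih =>
    simp only [aK, ZFSet.mem_insert_iff, ih]
    constructor
    · rintro (rfl | ⟨i, h1, h2, rfl⟩)
      · exact ⟨k + 1, by omega, by omega, rfl⟩
      · exact ⟨i, h1, by omega, rfl⟩
    · rintro ⟨i, h1, h2, rfl⟩
      by_cases hik : i = k + 1
      · subst hik; exact Or.inl rfl
      · exact Or.inr ⟨i, h1, by omega, rfl⟩

theorem mem_TCset_aK {k : ℕ} {w : ZFSet} (hw : w ∈ TCset (aK k)) :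
    ∃ j, j ≤ k ∧ w = sIter j := by
  rcases mem_TCset.1 hw with hw | ⟨y, hy, hw⟩
  · obtain ⟨i, h1, h2, rfl⟩ := mem_aK.1 hw
    exact ⟨i, h2, rfl⟩
  · obtain ⟨i, h1, h2, rfl⟩ := mem_aK.1 hy
    obtain ⟨j, hj, rfl⟩ := mem_TCset_sIter i w hw
    exact ⟨j, by omega, rfl⟩

/-- the witnesses `qᵢ = {∅, sᵢ}` -/
def qSet (i : ℕ) : ZFSet := insert ∅ {sIter i}

theorem empty_mem_qSet (i : ℕ) : (∅ : ZFSet) ∈ qSet i :=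
  ZFSet.mem_insert_iff.2 (Or.inl rfl)

theorem sIter_mem_qSet (i : ℕ) : sIter i ∈ qSet i :=
  ZFSet.mem_insert_iff.2 (Or.inr (ZFSet.mem_singleton.2 rfl))

theorem qSet_ne_sIter {i j : ℕ} (hi : 1 ≤ i) : qSet i ≠ sIter j := by
  intro h
  match j, h with
  | 0, h =>
    have := empty_mem_qSet i
    rw [h] at this
    exact ZFSet.notMem_empty _ this
  | j + 1, h =>
    have h1 := empty_mem_qSet i
    have h2 := sIter_mem_qSet i
    rw [h] at h1 h2
    have h1' : (∅ : ZFSet) = sIter j := ZFSet.mem_singleton.1 h1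
    have h2' : sIter i = sIter j := ZFSet.mem_singleton.1 h2
    have : sIter i = ∅ := by rw [h2', ← h1']
    obtain ⟨i', rfl⟩ : ∃ i', i = i' + 1 := ⟨i - 1, by omega⟩
    exact sIter_succ_ne_empty i' this

theorem qSet_inj {i j : ℕ} (hi : 1 ≤ i) (h : qSet i = qSet j) : i = j := by
  have h2 := sIter_mem_qSet i
  rw [h] at h2
  rcases ZFSet.mem_insert_iff.1 h2 with he | he
  · obtain ⟨i', rfl⟩ : ∃ i', i = i' + 1 := ⟨i - 1, by omega⟩
    exact absurd he (sIter_succ_ne_empty i')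
  · exact sIter_inj (ZFSet.mem_singleton.1 he)

theorem qSet_mem_kpair (i : ℕ) : qSet i ∈ kpair ∅ (sIter i) := by
  unfold kpair
  refine ZFSet.mem_insert_iff.2 (Or.inr (ZFSet.mem_singleton.2 ?_))
  rfl

/-! the two negative statements -/

theorem not_pcsf_single : ¬ PCSF 0 1 (fun _ a => zImage (fun b => kpair ∅ b) (a 0)) := by
  intro hP
  obtain ⟨C, hC⟩ := pc_growth hP Fin.elim0 (fun j => j.elim0)
  set k := C + 1 with hk
  obtain ⟨hHF, hcnt⟩ := hC (fun _ => aK k) (fun _ => isHF_aK k)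
  set F := zImage (fun b => kpair ∅ b) (aK k) with hF
  set Q : Finset ZFSet := (Finset.Icc 1 k).image qSet with hQ
  have hQcard : Q.card = k := by
    rw [hQ, Finset.card_image_of_injOn, Nat.card_Icc]
    · omega
    · intro i hi j hj hij
      exact qSet_inj (Finset.mem_Icc.1 hi).1 hij
  have hQsub : (Q : Set ZFSet) ⊆
      (TCset F).toSet \ ⋃ (_ : Fin 1), (TCset (aK k)).toSet := by
    intro w hw
    rcases Finset.mem_image.1 hw with ⟨i, hi, rfl⟩
    obtain ⟨hi1, hik⟩ := Finset.mem_Icc.1 hi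
    constructor
    · rw [ZFSet.mem_toSet]
      have hmem : kpair ∅ (sIter i) ∈ F :=
        mem_zImage.2 ⟨sIter i, mem_aK.2 ⟨i, hi1, hik, rfl⟩, rfl⟩
      exact TCset_trans (mem_TCset_of_mem hmem) (qSet_mem_kpair i)
    · intro hc
      rcases Set.mem_iUnion.1 hc with ⟨_, hc⟩
      rw [ZFSet.mem_toSet] at hc
      obtain ⟨j, _, he⟩ := mem_TCset_aK hc
      exact qSet_ne_sIter hi1 he
  have hfin : ((TCset F).toSet \ ⋃ (_ : Fin 1), (TCset (aK k)).toSet).Finite := by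
    refine Set.Finite.diff ?_
    exact hHF
  have : k ≤ C := by
    calc k = Q.card := hQcard.symm
      _ = (Q : Set ZFSet).ncard := (Set.ncard_coe_finset Q).symm
      _ ≤ ((TCset F).toSet \ ⋃ (_ : Fin 1), (TCset (aK k)).toSet).ncard :=
        Set.ncard_le_ncard hQsub hfin
      _ ≤ C := hcnt
  omega

theorem not_pcsf_prod : ¬ PCSF 0 2 (fun _ a => zProd (a 0) (a 1)) := by
  intro hP
  apply not_pcsf_single
  have := PCSF.comp (n := 0) (m := 1) (fun _ a => zProd (a 0) (a 1))
    (fun (i : Fin 0) => Fin.elim0 (α := (Fin 0 → ZFSet) → (Fin 0 → ZFSet) → ZFSet) i)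
    ![fun _ _ => ({∅} : ZFSet), fun _ a => a 0]
    hP (fun i => i.elim0)
    (by
      intro i
      fin_cases i
      · show PCSF 0 1 fun _ _ => ({∅} : ZFSet)
        exact PCSF.ofMinus _ (pm_const_one 1)
      · show PCSF 0 1 fun _ a => a 0
        exact PCSF.ofMinus _ (PCSFminus.proj 0))
  apply pc_congr this
  funext x a
  show zProd {∅} (a 0) = zImage (fun b => kpair ∅ b) (a 0)
  apply ZFSet.ext; intro p
  rw [mem_zProd, mem_zImage]
  constructor
  · rintro ⟨u, hu, v, hv, rfl⟩
    rw [ZFSet.mem_singleton.1 hu]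
    exact ⟨v, hv, rfl⟩
  · rintro ⟨v, hv, rfl⟩
    exact ⟨∅, ZFSet.mem_singleton.2 rfl, v, hv, rfl⟩


/-- The Cartesian product with safe arguments is not in
`PCSF`, and neither is `f(−/a) = {0} × a`; but the Cartesian product with
normal arguments is in `PCSF`. -/
theorem prod_not_PCSF :
    ¬ PCSF 0 2 (fun _ a => zProd (a 0) (a 1)) ∧
    ¬ PCSF 0 1 (fun _ a => zImage (fun b => kpair ∅ b) (a 0)) ∧
    PCSF 2 0 fun x _ => zProd (x 0) (x 1) :=
  ⟨not_pcsf_prod, not_pcsf_single, pc_prodNormal⟩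

end PCSFPaper
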